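/- (Proposition reverse, total variation bound.) There exists a function g : ℝ → ℝ with g(x) = (U_o^♭)'(x) for a.e. x ∈ ℝ whose total variation over ℝ is at most the total variation of u_T over ℝ (as an equality or inequality of extended nonnegative reals): Var(g; ℝ) ≤ Var(u_T; ℝ). -/

import Mathlib

open Filter MeasureTheory

/-- Condition (f): `f` is `C²`, strongly convex (`f'' > 0` everywhere), and
`f' → ∓∞` at `∓∞`. -/
def CondF (f : ℝ → ℝ) : Prop :=
  ContDiff ℝ 2 f ∧ (∀ x, 0 < deriv (deriv f) x) ∧
    Tendsto (deriv f) atBot atBot ∧ Tendsto (deriv f) atTop atTop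

/-- The Legendre transform `f*(y) = sup_x (y·x − f(x))`. -/
noncomputable def legendre (f : ℝ → ℝ) (y : ℝ) : ℝ :=
  sSup (Set.range fun x => y * x - f x)

/-- `U_T(x) = ∫_{x̌}^x u_T`. -/
noncomputable def UT (uT : ℝ → ℝ) (xc x : ℝ) : ℝ := ∫ ξ in xc..x, uT ξ

/-- `U_o^♭(x) = sup_ξ [U_T(ξ) − T f*((ξ−x)/T)]`. -/
noncomputable def Uflat (f : ℝ → ℝ) (T : ℝ) (uT : ℝ → ℝ) (xc x : ℝ) : ℝ :=
  sSup (Set.range fun ξ => UT uT xc ξ - T * legendre f ((ξ - x) / T))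

/-- `M(x)`: the set of maximizers in the definition of `U_o^♭(x)`. -/
def MSet (f : ℝ → ℝ) (T : ℝ) (uT : ℝ → ℝ) (xc x : ℝ) : Set ℝ :=
  {ξ | UT uT xc ξ = Uflat f T uT xc x + T * legendre f ((ξ - x) / T)}

/-- Oleinik condition (O) at `T`. -/
def Oleinik (f : ℝ → ℝ) (T : ℝ) (uT : ℝ → ℝ) : Prop :=
  ∀ x Δ : ℝ, 0 < Δ → deriv f (uT (x + Δ)) - deriv f (uT x) ≤ Δ / T

/-- The Hopf–Lax operator at time `T`: `(S_T U)(x) = inf_ξ [U(ξ) + T f*((x−ξ)/T)]`. -/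
noncomputable def HopfLax (f : ℝ → ℝ) (T : ℝ) (U : ℝ → ℝ) (x : ℝ) : ℝ :=
  sInf (Set.range fun ξ => U ξ + T * legendre f ((x - ξ) / T))

/-- Left continuity of a real function. -/
def LeftCts (u : ℝ → ℝ) : Prop :=
  ∀ x, Tendsto u (nhdsWithin x (Set.Iio x)) (nhds (u x))

/-- `II_T(U_T; J)`: Lipschitz functions with a.e. derivative in `J` evolving into `U_T`
under the Hopf–Lax semigroup. -/
def IIT (f : ℝ → ℝ) (T : ℝ) (uT : ℝ → ℝ) (xc : ℝ) (J : Set ℝ) : Set (ℝ → ℝ) :=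
  {U | (∃ K, LipschitzWith K U) ∧ (∀ᵐ x ∂volume, deriv U x ∈ J) ∧
    ∀ x, HopfLax f T U x = UT uT xc x}

/-- `U_o^♯(x) = sup { U(x) : U ∈ II_T(U_T; J) }`. -/
noncomputable def Usharp (f : ℝ → ℝ) (T : ℝ) (uT : ℝ → ℝ) (xc : ℝ) (J : Set ℝ) (x : ℝ) : ℝ :=
  sSup ((fun U : ℝ → ℝ => U x) '' IIT f T uT xc J)


/-- A two-sided envelope inequality with continuous-in-the-limit slopes forces
differentiability. -/
lemma sandwich_deriv {L : ℝ → ℝ} {m : ℝ → ℝ → ℝ} {x : ℝ} {l : ℝ}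
    (H : ∀ a b : ℝ, (b - a) * m a b ≤ L b - L a)
    (h1 : Tendsto (fun b => m x b) (nhdsWithin x {x}ᶜ) (nhds l))
    (h2 : Tendsto (fun b => m b x) (nhdsWithin x {x}ᶜ) (nhds l)) :
    HasDerivAt L l x := by
  rw [hasDerivAt_iff_tendsto_slope]
  have key : ∀ b : ℝ, b ≠ x →
      min (m x b) (m b x) ≤ slope L x b ∧ slope L x b ≤ max (m x b) (m b x) := by
    intro b hb
    have hxb := H x b
    have hbx := H b x
    have hbx' : L b - L x ≤ (b - x) * m b x := by
      have : (x - b) * m b x = -((b - x) * m b x) := by ring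
      linarith [this ▸ hbx]
    rw [slope_def_field]
    rcases lt_or_gt_of_ne hb with h | h
    · -- b < x
      have hneg : b - x < 0 := by linarith
      constructor
      · refine le_trans (min_le_right _ _) ?_
        rw [le_div_iff_of_neg hneg]
        linarith [hbx']
      · refine le_trans ?_ (le_max_left _ _)
        rw [div_le_iff_of_neg hneg]
        linarith [hxb]
    · -- x < b
      have hpos : 0 < b - x := by linarith
      constructor
      · refine le_trans (min_le_left _ _) ?_
        rw [le_div_iff₀ hpos]
        linarith [hxb]
      · refine le_trans ?_ (le_max_right _ _)
        rw [div_le_iff₀ hpos]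
        linarith [hbx']
  have hmin : Tendsto (fun b => min (m x b) (m b x)) (nhdsWithin x {x}ᶜ) (nhds l) := by
    simpa using h1.min h2
  have hmax : Tendsto (fun b => max (m x b) (m b x)) (nhdsWithin x {x}ᶜ) (nhds l) := by
    simpa using h1.max h2
  refine tendsto_of_tendsto_of_tendsto_of_le_of_le' hmin hmax ?_ ?_
  · filter_upwards [self_mem_nhdsWithin] with b hb using (key b hb).1
  · filter_upwards [self_mem_nhdsWithin] with b hb using (key b hb).2

lemma phi_exists (f : ℝ → ℝ) (hf : CondF f) :
    ∃ φ : ℝ → ℝ, Continuous φ ∧ Monotone φ ∧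
      (∀ y z : ℝ, (z - y) * φ y ≤ legendre f z - legendre f y) ∧
      (∀ y R : ℝ, y * R - f R ≤ legendre f y) ∧
      (∀ y, HasDerivAt (legendre f) (φ y) y) := by
  obtain ⟨hC2, hpos, hbot, htop⟩ := hf
  have hdf : Differentiable ℝ f := hC2.differentiable (by norm_num)
  have hcont' : Continuous (deriv f) := hC2.continuous_deriv (by norm_num)
  have hsm : StrictMono (deriv f) := strictMono_of_deriv_pos hpos
  have hsurj : Function.Surjective (deriv f) := hcont'.surjective htop hbot
  let e : ℝ ≃o ℝ := StrictMono.orderIsoOfSurjective (deriv f) hsm hsurj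
  set φ : ℝ → ℝ := fun y => e.symm y with hφ
  have hφc : Continuous φ := (OrderIso.continuous e.symm)
  have hφm : Monotone φ := e.symm.monotone
  have hde : ∀ y, deriv f (φ y) = y := fun y => by
    simpa [hφ] using StrictMono.orderIsoOfSurjective_self_symm_apply (deriv f) hsm hsurj y
  -- convexity inequality
  have conv : ∀ u v : ℝ, deriv f u * (v - u) ≤ f v - f u := by
    intro u v
    rcases lt_trichotomy u v with h | h | h
    · obtain ⟨c, hc, hceq⟩ := exists_hasDerivAt_eq_slope f (deriv f) h
        (hdf.continuous.continuousOn) (fun x _ => (hdf x).hasDerivAt)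
      have hcv : deriv f u ≤ deriv f c := (hsm.le_iff_le).2 (le_of_lt hc.1)
      rw [eq_div_iff (sub_ne_zero.2 (ne_of_gt h))] at hceq
      nlinarith [mul_le_mul_of_nonneg_right hcv (by linarith : (0:ℝ) ≤ v - u)]
    · simp [h]
    · obtain ⟨c, hc, hceq⟩ := exists_hasDerivAt_eq_slope f (deriv f) h
        (hdf.continuous.continuousOn) (fun x _ => (hdf x).hasDerivAt)
      have hcv : deriv f c ≤ deriv f u := (hsm.le_iff_le).2 (le_of_lt hc.2)
      rw [eq_div_iff (sub_ne_zero.2 (ne_of_gt h))] at hceq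
      nlinarith [mul_le_mul_of_nonneg_right hcv (by linarith : (0:ℝ) ≤ u - v)]
  have hgrL : ∀ y, IsGreatest (Set.range fun x => y * x - f x) (y * φ y - f (φ y)) := by
    intro y
    constructor
    · exact ⟨φ y, rfl⟩
    · rintro _ ⟨z, rfl⟩
      have h2 := conv (φ y) z
      rw [hde y] at h2
      show y * z - f z ≤ y * φ y - f (φ y)
      nlinarith [h2]
  have Lval : ∀ y, legendre f y = y * φ y - f (φ y) := fun y => (hgrL y).csSup_eq
  have lin : ∀ y R : ℝ, y * R - f R ≤ legendre f y := by
    intro y R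
    exact le_csSup (hgrL y).bddAbove ⟨R, rfl⟩
  have env : ∀ y z : ℝ, (z - y) * φ y ≤ legendre f z - legendre f y := by
    intro y z
    have h1 : z * φ y - f (φ y) ≤ legendre f z := lin z (φ y)
    rw [Lval y]
    linarith
  refine ⟨φ, hφc, hφm, env, lin, ?_⟩
  intro y
  exact sandwich_deriv (m := fun a _ => φ a) (fun a b => env a b)
    tendsto_const_nhds (((hφc.tendsto y).mono_left nhdsWithin_le_nhds))

lemma legendre_diffmono (f φ : ℝ → ℝ) (hφm : Monotone φ)
    (HL : ∀ y, HasDerivAt (legendre f) (φ y) y) :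
    ∀ t, 0 ≤ t → ∀ yB yD, yB ≤ yD →
      legendre f (yB + t) - legendre f yB ≤ legendre f (yD + t) - legendre f yD := by
  intro t ht
  have hψ : ∀ y, HasDerivAt (fun y => legendre f (y + t) - legendre f y)
      (φ (y + t) * 1 - φ y) y := by
    intro y
    exact ((HL (y + t)).comp y ((hasDerivAt_id y).add_const t)).sub (HL y)
  have hmono : Monotone (fun y => legendre f (y + t) - legendre f y) := by
    apply monotone_of_deriv_nonneg
    · intro y; exact (hψ y).differentiableAt
    · intro y
      rw [(hψ y).deriv]
      have : φ y ≤ φ (y + t) := hφm (by linarith)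
      linarith
  exact fun yB yD h => hmono h

lemma integrableOn_of_bound (uT : ℝ → ℝ) (huT : Measurable uT) (C : ℝ) (hC : ∀ x, |uT x| ≤ C)
    (s : Set ℝ) (hs : MeasureTheory.volume s ≠ ⊤) : MeasureTheory.IntegrableOn uT s := by
  refine Integrable.mono' (g := fun _ => C)
    (integrableOn_const hs)
    (huT.aestronglyMeasurable.restrict) ?_
  exact Filter.Eventually.of_forall fun x => by simpa [Real.norm_eq_abs] using hC x

lemma xi_exists (f : ℝ → ℝ) (T : ℝ) (hT : 0 < T) (uT : ℝ → ℝ) (huT : Measurable uT)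
    (C : ℝ) (hC : ∀ x, |uT x| ≤ C) (xc : ℝ) (φ : ℝ → ℝ)
    (hφm : Monotone φ)
    (lin : ∀ y R : ℝ, y * R - f R ≤ legendre f y)
    (HL : ∀ y, HasDerivAt (legendre f) (φ y) y) :
    ∃ Ξ : ℝ → ℝ, Monotone Ξ ∧
      (∀ x ζ, UT uT xc ζ - T * legendre f ((ζ - x) / T) ≤
        UT uT xc (Ξ x) - T * legendre f ((Ξ x - x) / T)) ∧
      (∀ x, Uflat f T uT xc x = UT uT xc (Ξ x) - T * legendre f ((Ξ x - x) / T)) := by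
  have hC0 : 0 ≤ C := le_trans (abs_nonneg _) (hC 0)
  have contL : Continuous (legendre f) :=
    continuous_iff_continuousAt.2 fun y => (HL y).continuousAt
  set F : ℝ → ℝ → ℝ := fun x ξ => UT uT xc ξ - T * legendre f ((ξ - x) / T) with hF
  have hInt : ∀ a b : ℝ, IntervalIntegrable uT MeasureTheory.volume a b := by
    intro a b
    exact ⟨integrableOn_of_bound uT huT C hC _ measure_Ioc_lt_top.ne,
      integrableOn_of_bound uT huT C hC _ measure_Ioc_lt_top.ne⟩
  have contUT : Continuous (UT uT xc) := by
    have := intervalIntegral.continuous_primitive hInt xc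
    exact this
  have hUTb : ∀ ξ : ℝ, |UT uT xc ξ| ≤ C * |ξ - xc| := by
    intro ξ
    have := intervalIntegral.norm_integral_le_of_norm_le_const (C := C) (f := uT)
      (a := xc) (b := ξ)
      (fun x _ => by simpa [Real.norm_eq_abs] using hC x)
    simpa [UT, Real.norm_eq_abs] using this
  set K : ℝ := max (f (C + 1)) (f (-(C + 1))) with hK
  have hLlb : ∀ y : ℝ, (C + 1) * |y| - K ≤ legendre f y := by
    intro y
    rcases le_or_gt 0 y with h | h
    · have h1 := lin y (C + 1)
      have h2 : f (C + 1) ≤ K := le_max_left _ _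
      rw [abs_of_nonneg h]
      nlinarith
    · have h1 := lin y (-(C + 1))
      have h2 : f (-(C + 1)) ≤ K := le_max_right _ _
      rw [abs_of_neg h]
      nlinarith
  have hcoer : ∀ x ξ : ℝ, F x ξ ≤ C * |x - xc| + T * K - |ξ - x| := by
    intro x ξ
    have h1 : UT uT xc ξ ≤ C * |ξ - xc| := le_trans (le_abs_self _) (hUTb ξ)
    have h3 : |(ξ - x) / T| = |ξ - x| / T := by
      rw [abs_div, abs_of_pos hT]
    have h2 : (C + 1) * (|ξ - x| / T) - K ≤ legendre f ((ξ - x) / T) := by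
      rw [← h3]; exact hLlb _
    have h5 : T * ((C + 1) * (|ξ - x| / T) - K) ≤ T * legendre f ((ξ - x) / T) :=
      mul_le_mul_of_nonneg_left h2 hT.le
    have h6 : T * ((C + 1) * (|ξ - x| / T) - K) = (C + 1) * |ξ - x| - T * K := by
      field_simp
    have h4 : C * |ξ - xc| ≤ C * (|ξ - x| + |x - xc|) :=
      mul_le_mul_of_nonneg_left (abs_sub_le ξ x xc) hC0
    show UT uT xc ξ - T * legendre f ((ξ - x) / T) ≤ _
    nlinarith
  have hFcont : ∀ x, Continuous (F x) := by
    intro x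
    exact contUT.sub (continuous_const.mul (contL.comp
      ((continuous_id.sub continuous_const).div_const T)))
  set M : ℝ → Set ℝ := fun x => {ξ | ∀ ζ, F x ζ ≤ F x ξ} with hM
  have hne : ∀ x, (M x).Nonempty := by
    intro x
    set R : ℝ := C * |x - xc| + T * K - F x x with hRdef
    have hcx := hcoer x x
    simp only [sub_self, abs_zero] at hcx
    have hR0 : 0 ≤ R := by rw [hRdef]; linarith
    obtain ⟨ξ₀, hξ₀mem, hmaxOn⟩ := isCompact_Icc.exists_isMaxOn
      (s := Set.Icc (x - (R + 1)) (x + (R + 1)))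
      ⟨x, Set.mem_Icc.2 ⟨by linarith, by linarith⟩⟩ (hFcont x).continuousOn
    refine ⟨ξ₀, fun ζ => ?_⟩
    by_cases hζ : ζ ∈ Set.Icc (x - (R + 1)) (x + (R + 1))
    · exact hmaxOn hζ
    · have hxmem : x ∈ Set.Icc (x - (R + 1)) (x + (R + 1)) := by
        constructor <;> linarith
      have hxle : F x x ≤ F x ξ₀ := hmaxOn hxmem
      simp only [Set.mem_Icc, not_and_or, not_le] at hζ
      have hfar : R + 1 < |ζ - x| := by
        rcases hζ with h | h
        · rw [abs_sub_comm, abs_of_pos (by linarith)]; linarith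
        · rw [abs_of_pos (by linarith)]; linarith
      have := hcoer x ζ
      have hRR : C * |x - xc| + T * K - |ζ - x| < F x x := by
        rw [hRdef] at hfar; linarith
      linarith
  have hbdd : ∀ x, BddAbove (M x) := by
    intro x
    refine ⟨x + (C * |x - xc| + T * K - F x x), fun ξ hξ => ?_⟩
    have h1 : F x x ≤ F x ξ := hξ x
    have h2 := hcoer x ξ
    have h3 : ξ - x ≤ |ξ - x| := le_abs_self _
    linarith
  have hclosed : ∀ x, IsClosed (M x) := by
    intro x
    have : M x = ⋂ ζ, {ξ | F x ζ ≤ F x ξ} := by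
      ext ξ; simp [hM, Set.mem_iInter]
    rw [this]
    exact isClosed_iInter fun ζ => isClosed_le continuous_const (hFcont x)
  set Ξ : ℝ → ℝ := fun x => sSup (M x) with hΞ
  have hmem : ∀ x, Ξ x ∈ M x := fun x => (hclosed x).csSup_mem (hne x) (hbdd x)
  have hmaxi : ∀ x ζ, F x ζ ≤ F x (Ξ x) := fun x ζ => hmem x ζ
  have hval : ∀ x, Uflat f T uT xc x = F x (Ξ x) := by
    intro x
    exact IsGreatest.csSup_eq ⟨⟨Ξ x, rfl⟩, by rintro _ ⟨ζ, rfl⟩; exact hmem x ζ⟩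
  have dm := legendre_diffmono f φ hφm HL
  refine ⟨Ξ, ?_, hmaxi, hval⟩
  intro a b hab
  by_contra hba
  push_neg at hba
  have hs1 : 0 ≤ F a (Ξ a) - F a (Ξ b) := sub_nonneg.2 (hmaxi a (Ξ b))
  have hs2 : 0 ≤ F b (Ξ b) - F b (Ξ a) := sub_nonneg.2 (hmaxi b (Ξ a))
  have ht0 : 0 ≤ (b - a) / T := div_nonneg (by linarith) hT.le
  have hBD : (Ξ b - b) / T ≤ (Ξ a - b) / T := by gcongr <;> linarith
  have hdm := dm ((b - a) / T) ht0 ((Ξ b - b) / T) ((Ξ a - b) / T) hBD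
  have e1 : (Ξ b - b) / T + (b - a) / T = (Ξ b - a) / T := by field_simp; ring
  have e2 : (Ξ a - b) / T + (b - a) / T = (Ξ a - a) / T := by field_simp; ring
  rw [e1, e2] at hdm
  have heq : F a (Ξ a) - F a (Ξ b) + (F b (Ξ b) - F b (Ξ a)) =
      T * ((legendre f ((Ξ b - a) / T) - legendre f ((Ξ b - b) / T)) -
        (legendre f ((Ξ a - a) / T) - legendre f ((Ξ a - b) / T))) := by
    simp only [hF]; ring
  have hX : (legendre f ((Ξ b - a) / T) - legendre f ((Ξ b - b) / T)) -
      (legendre f ((Ξ a - a) / T) - legendre f ((Ξ a - b) / T)) ≤ 0 := by linarith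
  have hle : F a (Ξ a) - F a (Ξ b) + (F b (Ξ b) - F b (Ξ a)) ≤ 0 := by
    rw [heq]; exact mul_nonpos_iff.2 (Or.inl ⟨hT.le, hX⟩)
  have hs2eq : F b (Ξ a) = F b (Ξ b) := le_antisymm (hmaxi b (Ξ a)) (by linarith)
  have hmemb : Ξ a ∈ M b := fun ζ => hs2eq ▸ hmaxi b ζ
  exact absurd (le_csSup (hbdd b) hmemb) (not_le.2 hba)

lemma uflat_deriv (f : ℝ → ℝ) (T : ℝ) (hT : 0 < T) (uT : ℝ → ℝ) (xc : ℝ)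
    (φ : ℝ → ℝ) (hφc : Continuous φ)
    (env : ∀ y z : ℝ, (z - y) * φ y ≤ legendre f z - legendre f y)
    (Ξ : ℝ → ℝ) (hΞm : Monotone Ξ)
    (hmaxi : ∀ x ζ, UT uT xc ζ - T * legendre f ((ζ - x) / T) ≤
        UT uT xc (Ξ x) - T * legendre f ((Ξ x - x) / T))
    (hval : ∀ x, Uflat f T uT xc x = UT uT xc (Ξ x) - T * legendre f ((Ξ x - x) / T)) :
    ∀ᵐ x ∂MeasureTheory.volume, HasDerivAt (Uflat f T uT xc) (φ ((Ξ x - x) / T)) x := by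
  have key : ∀ a b : ℝ, (b - a) * φ ((Ξ a - b) / T) ≤
      Uflat f T uT xc b - Uflat f T uT xc a := by
    intro a b
    have h1 : UT uT xc (Ξ a) - T * legendre f ((Ξ a - b) / T) ≤ Uflat f T uT xc b := by
      rw [hval b]; exact hmaxi b (Ξ a)
    have h2 := hval a
    have henv := env ((Ξ a - b) / T) ((Ξ a - a) / T)
    have e3 : (Ξ a - a) / T - (Ξ a - b) / T = (b - a) / T := by field_simp; ring
    rw [e3] at henv
    have h5 := mul_le_mul_of_nonneg_left henv hT.le
    have e4 : T * ((b - a) / T * φ ((Ξ a - b) / T)) = (b - a) * φ ((Ξ a - b) / T) := by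
      field_simp
    rw [e4] at h5
    linarith
  have hcount : {x | ¬ContinuousAt Ξ x}.Countable := hΞm.countable_not_continuousAt
  have hnull : MeasureTheory.volume {x | ¬ContinuousAt Ξ x} = 0 :=
    hcount.measure_zero _
  rw [MeasureTheory.ae_iff]
  refine MeasureTheory.measure_mono_null (fun x hx => ?_) hnull
  simp only [Set.mem_setOf_eq] at hx ⊢
  intro hcontx
  apply hx
  have hc1 : ContinuousAt (fun b => φ ((Ξ x - b) / T)) x :=
    hφc.continuousAt.comp ((continuousAt_const.sub continuousAt_id).div_const T)
  have hc2 : ContinuousAt (fun b => φ ((Ξ b - x) / T)) x :=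
    hφc.continuousAt.comp ((hcontx.sub continuousAt_const).div_const T)
  exact sandwich_deriv (m := fun a b => φ ((Ξ a - b) / T)) key
    (hc1.tendsto.mono_left nhdsWithin_le_nhds)
    (hc2.tendsto.mono_left nhdsWithin_le_nhds)

lemma chain_extend (u : ℝ → ℝ) {k : ℕ} {c : ℕ → ℝ} (hm : Monotone c)
    (hstab : ∀ j, k ≤ j → c j = c k) {b : ℝ} (hb : c k ≤ b) :
    ∃ c' : ℕ → ℝ, Monotone c' ∧ (∀ j, k + 1 ≤ j → c' j = c' (k + 1)) ∧
      (∀ j, j ≤ k → c' j = c j) ∧ c' (k + 1) = b ∧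
      ∑ j ∈ Finset.range (k + 1), |u (c' (j + 1)) - u (c' j)| =
        (∑ j ∈ Finset.range k, |u (c (j + 1)) - u (c j)|) + |u b - u (c k)| := by
  set c' : ℕ → ℝ := fun j => if j ≤ k then c j else b with hc'
  have hval : ∀ j, j ≤ k → c' j = c j := by
    intro j hj; simp [hc', hj]
  have hvb : ∀ j, k + 1 ≤ j → c' j = b := by
    intro j hj
    have : ¬ j ≤ k := by omega
    simp [hc', this]
  have hm' : Monotone c' := by
    apply monotone_nat_of_le_succ
    intro j
    by_cases hj : j + 1 ≤ k
    · rw [hval j (by omega), hval (j + 1) hj]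
      exact hm (Nat.le_succ j)
    · by_cases hj2 : j ≤ k
      · have hjk : j = k := by omega
        rw [hval j hj2, hvb (j + 1) (by omega), hjk]
        exact hb
      · rw [hvb j (by omega), hvb (j + 1) (by omega)]
  refine ⟨c', hm', fun j hj => by rw [hvb j hj, hvb (k + 1) le_rfl], hval,
    hvb (k + 1) le_rfl, ?_⟩
  rw [Finset.sum_range_succ]
  congr 1
  · apply Finset.sum_congr rfl
    intro j hj
    rw [Finset.mem_range] at hj
    rw [hval j (by omega), hval (j + 1) (by omega)]
  · rw [hvb (k + 1) le_rfl, hval k le_rfl]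

lemma core_var_bound (u : ℝ → ℝ) (hVfin : eVariationOn u Set.univ ≠ ⊤)
    (α β : ℝ → ℝ) (ξ G : ℕ → ℝ) (hξ : Monotone ξ)
    (hαβ : ∀ i, β (ξ i) ≤ G i ∧ G i ≤ α (ξ i))
    (hblock : ∀ i j : ℕ, i ≤ j → ξ i = ξ j → G j ≤ G i)
    (hα : ∀ i, Tendsto u (nhdsWithin (ξ i) (Set.Iio (ξ i))) (nhds (α (ξ i))))
    (hβ : ∀ i, Tendsto u (nhdsWithin (ξ i) (Set.Ioi (ξ i))) (nhds (β (ξ i))))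
    (n : ℕ) :
    ∑ i ∈ Finset.range n, |G (i + 1) - G i| ≤ (eVariationOn u Set.univ).toReal := by
  have chainbound : ∀ (k : ℕ) (c : ℕ → ℝ), Monotone c →
      ∑ j ∈ Finset.range k, |u (c (j + 1)) - u (c j)| ≤
        (eVariationOn u Set.univ).toReal := by
    intro k c hc
    have h := eVariationOn.sum_le (f := u) (n := k) hc (fun i => Set.mem_univ _)
    have heq : ∑ j ∈ Finset.range k, edist (u (c (j + 1))) (u (c j)) =
        ENNReal.ofReal (∑ j ∈ Finset.range k, |u (c (j + 1)) - u (c j)|) := by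
      rw [ENNReal.ofReal_sum_of_nonneg (fun i _ => abs_nonneg _)]
      exact Finset.sum_congr rfl fun j _ => by rw [edist_dist, Real.dist_eq]
    rw [heq] at h
    have h2 := ENNReal.toReal_mono hVfin h
    rwa [ENNReal.toReal_ofReal (Finset.sum_nonneg fun i _ => abs_nonneg _)] at h2
  apply le_of_forall_pos_le_add
  intro ε hε
  set δ : ℝ := ε / (4 * n + 2) with hδdef
  have hδ : 0 < δ := by positivity
  -- approximate one-sided limits
  have hαev : ∀ i : ℕ, ∀ᶠ y in nhdsWithin (ξ i) (Set.Iio (ξ i)), |u y - α (ξ i)| ≤ δ := by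
    intro i
    filter_upwards [Metric.tendsto_nhds.mp (hα i) δ hδ] with y hy
    rw [Real.dist_eq] at hy; exact hy.le
  have hβev : ∀ i : ℕ, ∀ᶠ y in nhdsWithin (ξ i) (Set.Ioi (ξ i)), |u y - β (ξ i)| ≤ δ := by
    intro i
    filter_upwards [Metric.tendsto_nhds.mp (hβ i) δ hδ] with y hy
    rw [Real.dist_eq] at hy; exact hy.le
  have inv : ∀ i : ℕ, ∃ (k : ℕ) (c : ℕ → ℝ), Monotone c ∧ (∀ j, k ≤ j → c j = c k) ∧
      c k ≤ ξ i ∧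
      (∑ j ∈ Finset.range i, |G (j + 1) - G j|) + (G i - u (c k)) ≤
        (∑ j ∈ Finset.range k, |u (c (j + 1)) - u (c j)|) + (4 * (i : ℝ) + 1) * δ := by
    intro i
    induction i with
    | zero =>
      obtain ⟨y, hy1, hy2⟩ :=
        ((hαev 0).and (self_mem_nhdsWithin : Set.Iio (ξ 0) ∈ _)).exists
      refine ⟨0, fun _ => y, monotone_const, fun j _ => rfl, le_of_lt hy2, ?_⟩
      simp only [Finset.range_zero, Finset.sum_empty, Nat.cast_zero]
      have hG0 : G 0 ≤ α (ξ 0) := (hαβ 0).2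
      have h2 : α (ξ 0) - u y ≤ δ := by
        have := abs_le.1 hy1
        linarith [this.1]
      linarith
    | succ i ih =>
      obtain ⟨k, c, hm, hstab, hck, hineq⟩ := ih
      rcases eq_or_lt_of_le (hξ (Nat.le_succ i)) with hcase | hcase
      · refine ⟨k, c, hm, hstab, by rw [← hcase]; exact hck, ?_⟩
        rw [Finset.sum_range_succ]
        have hdrop : G (i + 1) ≤ G i := hblock i (i + 1) (Nat.le_succ i) hcase
        have habs : |G (i + 1) - G i| = G i - G (i + 1) := by
          rw [abs_sub_comm, abs_of_nonneg (by linarith)]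
        rw [habs]
        push_cast
        linarith [hδ.le]
      · -- jump case: pick sample points b then a
        obtain ⟨b, hbδ, hbmem⟩ : ∃ b, |u b - β (ξ i)| ≤ δ ∧ b ∈ Set.Ioo (ξ i) (ξ (i + 1)) := by
          have h2 : Set.Ioo (ξ i) (ξ (i + 1)) ∈ nhdsWithin (ξ i) (Set.Ioi (ξ i)) :=
            Ioo_mem_nhdsGT_of_mem ⟨le_refl _, hcase⟩
          exact ((hβev i).and h2).exists
        obtain ⟨a, haδ, hamem⟩ : ∃ a, |u a - α (ξ (i + 1))| ≤ δ ∧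
            a ∈ Set.Ioo b (ξ (i + 1)) := by
          have h2 : Set.Ioo b (ξ (i + 1)) ∈ nhdsWithin (ξ (i + 1)) (Set.Iio (ξ (i + 1))) :=
            Ioo_mem_nhdsLT_of_mem ⟨hbmem.2, le_refl _⟩
          exact ((hαev (i + 1)).and h2).exists
        obtain ⟨c₁, hm₁, hstab₁, hval₁, hlast₁, hsum₁⟩ :=
          chain_extend u hm hstab (le_trans hck (le_of_lt hbmem.1))
        obtain ⟨c₂, hm₂, hstab₂, hval₂, hlast₂, hsum₂⟩ :=
          chain_extend u (b := a) hm₁ hstab₁ (by rw [hlast₁]; exact le_of_lt hamem.1)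
        refine ⟨k + 1 + 1, c₂, hm₂, ?_, ?_, ?_⟩
        · intro j hj
          rw [hstab₂ j hj]
        · rw [hlast₂]
          exact le_of_lt hamem.2
        · rw [hsum₂, hlast₂, hlast₁, hsum₁, Finset.sum_range_succ]
          -- now pure arithmetic
          have hGa : G (i + 1) ≤ α (ξ (i + 1)) := (hαβ (i + 1)).2
          have hGb : β (ξ i) ≤ G i := (hαβ i).1
          have habs1 := abs_le.1 hbδ
          have habs2 := abs_le.1 haδ
          have htri : |α (ξ (i + 1)) - β (ξ i)| ≤ |u a - u b| + 2 * δ := by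
            have t1 : |α (ξ (i + 1)) - β (ξ i)| ≤ |α (ξ (i + 1)) - u a| + |u a - β (ξ i)| :=
              abs_sub_le _ _ _
            have t2 : |u a - β (ξ i)| ≤ |u a - u b| + |u b - β (ξ i)| := abs_sub_le _ _ _
            have t3 : |α (ξ (i + 1)) - u a| ≤ δ := by rw [abs_sub_comm]; exact haδ
            linarith
          have hjmp : |G (i + 1) - G i| ≤
              (G i - β (ξ i)) + |α (ξ (i + 1)) - β (ξ i)| + (α (ξ (i + 1)) - G (i + 1)) := by
            rcases abs_cases (G (i + 1) - G i) with ⟨h, _⟩ | ⟨h, _⟩ <;>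
              rcases abs_cases (α (ξ (i + 1)) - β (ξ i)) with ⟨h2, _⟩ | ⟨h2, _⟩ <;>
              rw [h, h2] <;> linarith
          have hcb : u (c k) - u b ≤ |u b - u (c k)| := by
            rw [abs_sub_comm]; exact le_abs_self _
          push_cast
          linarith
  obtain ⟨k, c, hm, hstab, hck, hineq⟩ := inv n
  obtain ⟨b, hbδ, hbmem⟩ : ∃ b, |u b - β (ξ n)| ≤ δ ∧ b ∈ Set.Ioi (ξ n) :=
    ((hβev n).and self_mem_nhdsWithin).exists
  obtain ⟨c₁, hm₁, hstab₁, hval₁, hlast₁, hsum₁⟩ :=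
    chain_extend u hm hstab (le_trans hck (le_of_lt hbmem))
  have hchain := chainbound (k + 1) c₁ hm₁
  rw [hsum₁] at hchain
  have hGb : β (ξ n) ≤ G n := (hαβ n).1
  have habs1 := abs_le.1 hbδ
  have hcb : u (c k) - u b ≤ |u b - u (c k)| := by
    rw [abs_sub_comm]; exact le_abs_self _
  have hδε : (4 * (n : ℝ) + 2) * δ = ε := by
    rw [hδdef]
    field_simp
  nlinarith [hineq, hchain]

lemma slope_right_aux (f φ : ℝ → ℝ) (HL : ∀ y, HasDerivAt (legendre f) (φ y) y)
    {T : ℝ} (hT : 0 < T) (p : ℝ) :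
    Tendsto (fun h => T * (legendre f (p + h / T) - legendre f p) / h)
      (nhdsWithin 0 (Set.Ioi 0)) (nhds (φ p)) := by
  set G : ℝ → ℝ := fun h => T * (legendre f (p + h / T) - legendre f p) with hG
  have h1 : HasDerivAt (fun h : ℝ => p + h / T) (1 / T) 0 := by
    simpa using ((hasDerivAt_id (0 : ℝ)).div_const T).const_add p
  have h2 : HasDerivAt (fun h : ℝ => legendre f (p + h / T)) (φ (p + 0 / T) * (1 / T)) 0 :=
    by have := (HL (p + 0 / T)).comp 0 h1; exact this
  have h3 : HasDerivAt G (φ p) 0 := by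
    have h4 := (h2.sub_const (legendre f p)).const_mul T
    have e : T * (φ (p + 0 / T) * (1 / T)) = φ p := by
      simp only [zero_div, add_zero]; field_simp
    rw [e] at h4
    exact h4
  have h5 := hasDerivAt_iff_tendsto_slope.1 h3
  have h6 := h5.mono_left
    (nhdsWithin_mono 0 (fun y hy => ne_of_gt hy : Set.Ioi (0 : ℝ) ⊆ {(0 : ℝ)}ᶜ))
  refine h6.congr fun h => ?_
  rw [slope_def_field]
  have hG0 : G 0 = 0 := by simp [hG]
  rw [hG0, sub_zero, sub_zero]

lemma slope_left_aux (f φ : ℝ → ℝ) (HL : ∀ y, HasDerivAt (legendre f) (φ y) y)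
    {T : ℝ} (hT : 0 < T) (p : ℝ) :
    Tendsto (fun h => T * (legendre f p - legendre f (p - h / T)) / h)
      (nhdsWithin 0 (Set.Ioi 0)) (nhds (φ p)) := by
  set G : ℝ → ℝ := fun h => T * (legendre f p - legendre f (p - h / T)) with hG
  have h1 : HasDerivAt (fun h : ℝ => p - h / T) (-(1 / T)) 0 := by
    simpa using (((hasDerivAt_id (0 : ℝ)).div_const T).const_sub p)
  have h2 : HasDerivAt (fun h : ℝ => legendre f (p - h / T)) (φ (p - 0 / T) * (-(1 / T))) 0 :=
    by have := (HL (p - 0 / T)).comp 0 h1; exact this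
  have h3 : HasDerivAt G (φ p) 0 := by
    have h4 := (h2.const_sub (legendre f p)).const_mul T
    have e : T * -(φ (p - 0 / T) * -(1 / T)) = φ p := by
      simp only [zero_div, sub_zero]; field_simp
    rw [e] at h4
    exact h4
  have h5 := hasDerivAt_iff_tendsto_slope.1 h3
  have h6 := h5.mono_left
    (nhdsWithin_mono 0 (fun y hy => ne_of_gt hy : Set.Ioi (0 : ℝ) ⊆ {(0 : ℝ)}ᶜ))
  refine h6.congr fun h => ?_
  rw [slope_def_field]
  have hG0 : G 0 = 0 := by simp [hG]
  rw [hG0, sub_zero, sub_zero]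

lemma g_le_alpha (f : ℝ → ℝ) {T : ℝ} (hT : 0 < T) (uT : ℝ → ℝ) (huT : Measurable uT)
    (C : ℝ) (hC : ∀ x, |uT x| ≤ C) (xc : ℝ) (φ : ℝ → ℝ)
    (HL : ∀ y, HasDerivAt (legendre f) (φ y) y) (x ξ : ℝ)
    (hmax : ∀ ζ, UT uT xc ζ - T * legendre f ((ζ - x) / T) ≤
        UT uT xc ξ - T * legendre f ((ξ - x) / T))
    (lα : ℝ) (hα : Tendsto uT (nhdsWithin ξ (Set.Iio ξ)) (nhds lα)) :
    φ ((ξ - x) / T) ≤ lα := by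
  set p : ℝ := (ξ - x) / T with hp
  have hInt : ∀ a b : ℝ, IntervalIntegrable uT MeasureTheory.volume a b := fun a b =>
    ⟨integrableOn_of_bound uT huT C hC _ measure_Ioc_lt_top.ne,
     integrableOn_of_bound uT huT C hC _ measure_Ioc_lt_top.ne⟩
  apply le_of_forall_pos_le_add
  intro δ hδ
  have hev : ∀ᶠ y in nhdsWithin ξ (Set.Iio ξ), uT y ≤ lα + δ := by
    filter_upwards [Metric.tendsto_nhds.mp hα δ hδ] with y hy
    rw [Real.dist_eq] at hy
    linarith [(abs_le.1 hy.le).2]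
  obtain ⟨l, hl, hsub⟩ := mem_nhdsLT_iff_exists_Ioo_subset.1 hev
  have hδ' : 0 < ξ - l := sub_pos.2 (Set.mem_Iio.mp hl)
  have hbound : ∀ h : ℝ, h ∈ Set.Ioo (0 : ℝ) (ξ - l) →
      T * (legendre f p - legendre f (p - h / T)) / h ≤ lα + δ := by
    intro h hh
    have hmax' := hmax (ξ - h)
    have e1 : (ξ - h - x) / T = p - h / T := by rw [hp]; ring
    rw [e1] at hmax'
    have hdiff : UT uT xc ξ - UT uT xc (ξ - h) = ∫ y in Set.Ioc (ξ - h) ξ, uT y := by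
      have hadj := intervalIntegral.integral_add_adjacent_intervals
        (hInt xc (ξ - h)) (hInt (ξ - h) ξ)
      have : UT uT xc ξ - UT uT xc (ξ - h) = ∫ y in (ξ - h)..ξ, uT y := by
        simp only [UT]; linarith
      rw [this, intervalIntegral.integral_of_le (by linarith [hh.1] : ξ - h ≤ ξ)]
    have hIoo : (∫ y in Set.Ioc (ξ - h) ξ, uT y) = ∫ y in Set.Ioo (ξ - h) ξ, uT y :=
      MeasureTheory.integral_Ioc_eq_integral_Ioo
    have hmono : (∫ y in Set.Ioo (ξ - h) ξ, uT y) ≤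
        ∫ _ in Set.Ioo (ξ - h) ξ, (lα + δ) := by
      apply MeasureTheory.setIntegral_mono_on
        ((integrableOn_of_bound uT huT C hC _ measure_Ioc_lt_top.ne).mono_set
          Set.Ioo_subset_Ioc_self)
        (MeasureTheory.integrableOn_const measure_Ioo_lt_top.ne)
        measurableSet_Ioo
      intro y hy
      exact hsub ⟨by linarith [hy.1, hh.2], hy.2⟩
    have hconst : (∫ _ in Set.Ioo (ξ - h) ξ, (lα + δ)) = (lα + δ) * h := by
      rw [MeasureTheory.setIntegral_const, Real.volume_real_Ioo_of_le (by linarith [hh.1]),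
        show ξ - (ξ - h) = h by ring, smul_eq_mul, mul_comm]
    rw [div_le_iff₀ hh.1]
    have hfin : T * (legendre f p - legendre f (p - h / T)) ≤
        UT uT xc ξ - UT uT xc (ξ - h) := by nlinarith [hmax']
    rw [hdiff, hIoo] at hfin
    calc T * (legendre f p - legendre f (p - h / T)) ≤ _ := hfin
      _ ≤ (lα + δ) * h := by rw [← hconst]; exact hmono
  have hslope := slope_left_aux f φ HL hT p
  exact le_of_tendsto hslope
    (Filter.eventually_of_mem (Ioo_mem_nhdsGT_of_mem ⟨le_refl _, hδ'⟩) hbound)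

lemma beta_le_g (f : ℝ → ℝ) {T : ℝ} (hT : 0 < T) (uT : ℝ → ℝ) (huT : Measurable uT)
    (C : ℝ) (hC : ∀ x, |uT x| ≤ C) (xc : ℝ) (φ : ℝ → ℝ)
    (HL : ∀ y, HasDerivAt (legendre f) (φ y) y) (x ξ : ℝ)
    (hmax : ∀ ζ, UT uT xc ζ - T * legendre f ((ζ - x) / T) ≤
        UT uT xc ξ - T * legendre f ((ξ - x) / T))
    (lβ : ℝ) (hβ : Tendsto uT (nhdsWithin ξ (Set.Ioi ξ)) (nhds lβ)) :
    lβ ≤ φ ((ξ - x) / T) := by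
  set p : ℝ := (ξ - x) / T with hp
  have hInt : ∀ a b : ℝ, IntervalIntegrable uT MeasureTheory.volume a b := fun a b =>
    ⟨integrableOn_of_bound uT huT C hC _ measure_Ioc_lt_top.ne,
     integrableOn_of_bound uT huT C hC _ measure_Ioc_lt_top.ne⟩
  have key : ∀ δ : ℝ, 0 < δ → lβ - δ ≤ φ p := by
    intro δ hδ
    have hev : ∀ᶠ y in nhdsWithin ξ (Set.Ioi ξ), lβ - δ ≤ uT y := by
      filter_upwards [Metric.tendsto_nhds.mp hβ δ hδ] with y hy
      rw [Real.dist_eq] at hy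
      linarith [(abs_le.1 hy.le).1]
    obtain ⟨r, hr, hsub⟩ := mem_nhdsGT_iff_exists_Ioo_subset.1 hev
    have hδ' : 0 < r - ξ := sub_pos.2 (Set.mem_Ioi.mp hr)
    have hbound : ∀ h : ℝ, h ∈ Set.Ioo (0 : ℝ) (r - ξ) →
        lβ - δ ≤ T * (legendre f (p + h / T) - legendre f p) / h := by
      intro h hh
      have hmax' := hmax (ξ + h)
      have e1 : (ξ + h - x) / T = p + h / T := by rw [hp]; ring
      rw [e1] at hmax'
      have hdiff : UT uT xc (ξ + h) - UT uT xc ξ = ∫ y in Set.Ioc ξ (ξ + h), uT y := by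
        have hadj := intervalIntegral.integral_add_adjacent_intervals
          (hInt xc ξ) (hInt ξ (ξ + h))
        have : UT uT xc (ξ + h) - UT uT xc ξ = ∫ y in ξ..(ξ + h), uT y := by
          simp only [UT]; linarith
        rw [this, intervalIntegral.integral_of_le (by linarith [hh.1] : ξ ≤ ξ + h)]
      have hIoo : (∫ y in Set.Ioc ξ (ξ + h), uT y) = ∫ y in Set.Ioo ξ (ξ + h), uT y :=
        MeasureTheory.integral_Ioc_eq_integral_Ioo
      have hmono : (∫ _ in Set.Ioo ξ (ξ + h), (lβ - δ)) ≤
          ∫ y in Set.Ioo ξ (ξ + h), uT y := by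
        apply MeasureTheory.setIntegral_mono_on
          (MeasureTheory.integrableOn_const measure_Ioo_lt_top.ne)
          ((integrableOn_of_bound uT huT C hC _ measure_Ioc_lt_top.ne).mono_set
            Set.Ioo_subset_Ioc_self)
          measurableSet_Ioo
        intro y hy
        exact hsub ⟨hy.1, by linarith [hy.2, hh.2]⟩
      have hconst : (∫ _ in Set.Ioo ξ (ξ + h), (lβ - δ)) = (lβ - δ) * h := by
        rw [MeasureTheory.setIntegral_const, Real.volume_real_Ioo_of_le (by linarith [hh.1]),
          show ξ + h - ξ = h by ring, smul_eq_mul, mul_comm]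
      rw [le_div_iff₀ hh.1]
      have hfin : UT uT xc (ξ + h) - UT uT xc ξ ≤
          T * (legendre f (p + h / T) - legendre f p) := by nlinarith [hmax']
      rw [hdiff, hIoo] at hfin
      calc (lβ - δ) * h = _ := hconst.symm
        _ ≤ ∫ y in Set.Ioo ξ (ξ + h), uT y := hmono
        _ ≤ _ := hfin
    have hslope := slope_right_aux f φ HL hT p
    exact ge_of_tendsto hslope
      (Filter.eventually_of_mem (Ioo_mem_nhdsGT_of_mem ⟨le_refl _, hδ'⟩) hbound)
  apply le_of_forall_pos_le_add
  intro δ hδ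
  linarith [key δ hδ]

theorem stmt_19 (f : ℝ → ℝ) (hf : CondF f) (T : ℝ) (hT : 0 < T)
    (uT : ℝ → ℝ) (huT : Measurable uT) (C : ℝ) (hC : ∀ x, |uT x| ≤ C) (xc : ℝ) :
    ∃ g : ℝ → ℝ, (∀ᵐ x ∂volume, HasDerivAt (Uflat f T uT xc) (g x) x) ∧
      eVariationOn g Set.univ ≤ eVariationOn uT Set.univ := by
  obtain ⟨φ, hφc, hφm, env, lin, HL⟩ := phi_exists f hf
  obtain ⟨Ξ, hΞm, hmaxi, hval⟩ := xi_exists f T hT uT huT C hC xc φ hφm lin HL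
  set g : ℝ → ℝ := fun x => φ ((Ξ x - x) / T) with hg
  refine ⟨g, uflat_deriv f T hT uT xc φ hφc env Ξ hΞm hmaxi hval, ?_⟩
  by_cases hfin : eVariationOn uT Set.univ = ⊤
  · rw [hfin]; exact le_top
  · -- BV decomposition of uT and one-sided limits
    have hlbv : LocallyBoundedVariationOn uT Set.univ := by
      intro a b _ _
      exact ne_top_of_le_ne_top hfin (eVariationOn.mono uT Set.inter_subset_left)
    obtain ⟨P, Q, hP, hQ, hPQ⟩ := hlbv.exists_monotoneOn_sub_monotoneOn
    have hPm : Monotone P := monotoneOn_univ.1 hP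
    have hQm : Monotone Q := monotoneOn_univ.1 hQ
    set α : ℝ → ℝ := fun ζ => sSup (P '' Set.Iio ζ) - sSup (Q '' Set.Iio ζ) with hα
    set β : ℝ → ℝ := fun ζ => sInf (P '' Set.Ioi ζ) - sInf (Q '' Set.Ioi ζ) with hβ
    have hαt : ∀ ζ, Tendsto uT (nhdsWithin ζ (Set.Iio ζ)) (nhds (α ζ)) := by
      intro ζ
      have h1 := (hPm.tendsto_nhdsLT ζ).sub (hQm.tendsto_nhdsLT ζ)
      have : uT = fun y => P y - Q y := by rw [hPQ]; rfl
      rw [this]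
      exact h1
    have hβt : ∀ ζ, Tendsto uT (nhdsWithin ζ (Set.Ioi ζ)) (nhds (β ζ)) := by
      intro ζ
      have h1 := (hPm.tendsto_nhdsGT ζ).sub (hQm.tendsto_nhdsGT ζ)
      have : uT = fun y => P y - Q y := by rw [hPQ]; rfl
      rw [this]
      exact h1
    have hsand : ∀ x, β (Ξ x) ≤ g x ∧ g x ≤ α (Ξ x) := by
      intro x
      constructor
      · exact beta_le_g f hT uT huT C hC xc φ HL x (Ξ x) (hmaxi x) (β (Ξ x)) (hβt (Ξ x))
      · exact g_le_alpha f hT uT huT C hC xc φ HL x (Ξ x) (hmaxi x) (α (Ξ x)) (hαt (Ξ x))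
    have hunfold : eVariationOn g Set.univ =
        ⨆ p : ℕ × { u : ℕ → ℝ // Monotone u ∧ ∀ i, u i ∈ Set.univ },
          ∑ i ∈ Finset.range p.1, edist (g (p.2.1 (i + 1))) (g (p.2.1 i)) := rfl
    rw [hunfold]
    apply iSup_le
    rintro ⟨m, c, hc, -⟩
    have hreal := core_var_bound uT hfin α β (fun i => Ξ (c i))
      (fun i => g (c i)) (hΞm.comp hc)
      (fun i => hsand (c i))
      (by
        intro i j hij hζ
        simp only [hg]
        have hcij : c i ≤ c j := hc hij
        rw [hζ]
        apply hφm
        gcongr)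
      (fun i => hαt _) (fun i => hβt _) m
    have heq : ∑ i ∈ Finset.range m, edist (g (c (i + 1))) (g (c i)) =
        ENNReal.ofReal (∑ i ∈ Finset.range m, |g (c (i + 1)) - g (c i)|) := by
      rw [ENNReal.ofReal_sum_of_nonneg (fun i _ => abs_nonneg _)]
      exact Finset.sum_congr rfl fun j _ => by rw [edist_dist, Real.dist_eq]
    calc ∑ i ∈ Finset.range m, edist (g (c (i + 1))) (g (c i))
        = ENNReal.ofReal (∑ i ∈ Finset.range m, |g (c (i + 1)) - g (c i)|) := heq
      _ ≤ ENNReal.ofReal ((eVariationOn uT Set.univ).toReal) :=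
          ENNReal.ofReal_le_ofReal hreal
      _ = eVariationOn uT Set.univ := ENNReal.ofReal_toReal hfin
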